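/- Let m ≥ 1, g : {0,…,m−1} → ℝ, and ρ, ν ∈ ℝ. Suppose that for every θ ∈ ℝ the complex number C(e^{iθ}) = Σ_{t=0}^{m−1} g(t) e^{−iθt} satisfies Re C(e^{iθ}) − ρ·|C(e^{iθ})|² − ν ≥ 0. Then for every finitely supported u : ℕ → ℝ, the output y(t) = Σ_{k=0}^{min(t,m−1)} g(k) u(t−k) of the FIR convolution satisfies Σ_{t∈ℕ} ( u(t) y(t) − ρ y(t)² − ν u(t)² ) ≥ 0 (all sums having finitely many nonzero terms). -/

import Mathlib

open Finset intervalIntegral Real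


private lemma exp_int_intgrl (n : ℤ) (hn : n ≠ 0) :
    ∫ θ in (0:ℝ)..(2*π), Complex.exp ((n : ℂ) * θ * Complex.I) = 0 := by
  have hc : (n : ℂ) * Complex.I ≠ 0 := by
    simp [Complex.I_ne_zero, hn]
  have h := integral_exp_mul_complex (a := (0:ℝ)) (b := 2*π) (c := (n:ℂ)*Complex.I) hc
  have h1 : ∀ θ : ℝ, (n:ℂ) * Complex.I * θ = (n:ℂ) * θ * Complex.I := by intro θ; ring
  simp_rw [h1] at h
  rw [h]
  rw [show (n:ℂ) * (((2*π:ℝ)):ℂ) * Complex.I = (n:ℂ) * (2*(π:ℂ)*Complex.I) by push_cast; ring,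
    Complex.exp_int_mul_two_pi_mul_I]
  simp

private lemma ortho (s t : ℕ) :
    ∫ θ in (0:ℝ)..(2*π),
      Complex.exp (-(Complex.I*θ*t)) * Complex.exp (Complex.I*θ*s) =
      (if s = t then ((2*π : ℝ) : ℂ) else 0) := by
  have h : ∀ θ : ℝ, Complex.exp (-(Complex.I*θ*t)) * Complex.exp (Complex.I*θ*s)
      = Complex.exp (((((s:ℤ)-(t:ℤ)) : ℤ) : ℂ) * θ * Complex.I) := by
    intro θ; rw [← Complex.exp_add]; congr 1; push_cast; ring
  simp_rw [h]
  by_cases hst : s = t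
  · subst hst
    simp
  · rw [exp_int_intgrl _ (by intro hc; apply hst; omega)]
    simp [hst]

private lemma contin (c : ℕ → ℝ) (M : ℕ) :
    Continuous fun θ : ℝ => ∑ t ∈ range M, (c t : ℂ) * Complex.exp (-(Complex.I*θ*t)) := by
  apply continuous_finset_sum
  intro t _
  exact continuous_const.mul (Complex.continuous_exp.comp (by fun_prop))

private lemma parseval (M : ℕ) (a b : ℕ → ℝ) :
    ∫ θ in (0:ℝ)..(2*π),
      ((∑ t ∈ range M, (a t : ℂ) * Complex.exp (-(Complex.I*θ*t))) *
      (starRingEnd ℂ) (∑ s ∈ range M, (b s : ℂ) * Complex.exp (-(Complex.I*θ*s))))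
      = ((2*π * ∑ t ∈ range M, a t * b t : ℝ) : ℂ) := by
  have key : ∀ θ : ℝ,
      (∑ t ∈ range M, (a t : ℂ) * Complex.exp (-(Complex.I*θ*t))) *
      (starRingEnd ℂ) (∑ s ∈ range M, (b s : ℂ) * Complex.exp (-(Complex.I*θ*s)))
      = ∑ t ∈ range M, ∑ s ∈ range M,
          ((a t : ℂ) * (b s : ℂ)) * (Complex.exp (-(Complex.I*θ*t)) * Complex.exp (Complex.I*θ*s)) := by
    intro θ
    rw [map_sum, Finset.sum_mul_sum]
    refine Finset.sum_congr rfl fun t _ => Finset.sum_congr rfl fun s _ => ?_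
    rw [map_mul, ← Complex.exp_conj]
    simp only [Complex.conj_ofReal, map_neg, map_mul, Complex.conj_I, Complex.conj_natCast]
    ring_nf
  simp_rw [key]
  rw [intervalIntegral.integral_finset_sum]
  · have inner : ∀ t ∈ range M, (∫ θ in (0:ℝ)..(2*π), ∑ s ∈ range M,
        ((a t : ℂ) * (b s : ℂ)) * (Complex.exp (-(Complex.I*θ*t)) * Complex.exp (Complex.I*θ*s)))
        = ((2*π:ℝ):ℂ) * ((a t : ℂ) * (b t : ℂ)) := by
      intro t ht
      rw [intervalIntegral.integral_finset_sum]
      · have : ∀ s ∈ range M, (∫ θ in (0:ℝ)..(2*π),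
            ((a t : ℂ) * (b s : ℂ)) * (Complex.exp (-(Complex.I*θ*t)) * Complex.exp (Complex.I*θ*s)))
            = ((a t : ℂ) * (b s : ℂ)) * (if s = t then ((2*π:ℝ):ℂ) else 0) := by
          intro s _
          rw [intervalIntegral.integral_const_mul, ortho]
        rw [Finset.sum_congr rfl this]
        simp only [mul_ite, mul_zero]
        rw [Finset.sum_ite_eq' (range M) t (fun s => ((a t : ℂ) * (b s : ℂ)) * ((2*π:ℝ):ℂ))]
        simp only [ht, if_pos]
        ring
      · intro s _
        apply Continuous.intervalIntegrable
        exact continuous_const.mul ((Complex.continuous_exp.comp (by fun_prop)).mul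
          (Complex.continuous_exp.comp (by fun_prop)))
    rw [Finset.sum_congr rfl inner]
    rw [← Finset.mul_sum]
    push_cast
    ring_nf
  · intro t _
    apply Continuous.intervalIntegrable
    apply continuous_finset_sum
    intro s _
    exact continuous_const.mul ((Complex.continuous_exp.comp (by fun_prop)).mul
      (Complex.continuous_exp.comp (by fun_prop)))

/-- Parseval-type bridge (passivity): if the Nyquist locus of the FIR filter
satisfies `Re C(e^{iθ}) − ρ|C(e^{iθ})|² − ν ≥ 0` for every `θ`, then the FIR
convolution satisfies the time-domain dissipation inequality
`∑ (u y − ρ y² − ν u²) ≥ 0` for every finitely supported input. -/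
theorem stmt17 (m : ℕ) (hm : 1 ≤ m) (g : ℕ → ℝ) (ρ ν : ℝ)
    (hfreq : ∀ θ : ℝ,
      0 ≤ (∑ t ∈ Finset.range m, (g t : ℂ) * Complex.exp (-(Complex.I * (θ * t)))).re -
        ρ * ‖(∑ t ∈ Finset.range m,
          (g t : ℂ) * Complex.exp (-(Complex.I * (θ * t))))‖ ^ 2 - ν) :
    ∀ (u : ℕ → ℝ), (Function.support u).Finite →
      ∀ y : ℕ → ℝ,
        (∀ t, y t = ∑ k ∈ Finset.range (min t (m - 1) + 1), g k * u (t - k)) →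
        0 ≤ ∑' t : ℕ, (u t * y t - ρ * (y t) ^ 2 - ν * (u t) ^ 2) := by
  intro u hu y hy
  -- a bound on the support of u
  obtain ⟨N, hN⟩ : ∃ N, ∀ t, N ≤ t → u t = 0 := by
    refine ⟨hu.toFinset.sup id + 1, fun t ht => ?_⟩
    by_contra h
    have : t ∈ hu.toFinset := by simpa [Set.Finite.mem_toFinset, Function.mem_support] using h
    have h2 := Finset.le_sup (f := id) this
    simp only [id] at h2
    omega
  set M := N + m with hM
  have huM : ∀ t, M ≤ t → u t = 0 := fun t ht => hN t (by omega)
  have hy0 : ∀ t, M ≤ t → y t = 0 := by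
    intro t ht
    rw [hy]
    apply Finset.sum_eq_zero
    intro k hk
    rw [Finset.mem_range] at hk
    rw [hN (t - k) (by omega)]
    ring
  -- reduce tsum to a finite sum
  have htsum : ∑' t : ℕ, (u t * y t - ρ * (y t) ^ 2 - ν * (u t) ^ 2)
      = ∑ t ∈ range M, (u t * y t - ρ * (y t) ^ 2 - ν * (u t) ^ 2) := by
    apply tsum_eq_sum
    intro t ht
    rw [Finset.mem_range, not_lt] at ht
    rw [huM t ht, hy0 t ht]
    ring
  rw [htsum]
  -- define the trigonometric polynomials
  set C : ℝ → ℂ := fun θ => ∑ t ∈ range m, (g t : ℂ) * Complex.exp (-(Complex.I * (θ * t))) with hC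
  set U : ℝ → ℂ := fun θ => ∑ t ∈ range M, (u t : ℂ) * Complex.exp (-(Complex.I*θ*t)) with hU
  set Y : ℝ → ℂ := fun θ => ∑ t ∈ range M, (y t : ℂ) * Complex.exp (-(Complex.I*θ*t)) with hY
  -- convolution identity: Y = C * U
  have hyc : ∀ t, y t = ∑ k ∈ range m, if k ≤ t then g k * u (t - k) else 0 := by
    intro t
    rw [hy]
    rw [Finset.sum_congr rfl (fun k hk => ?_), Finset.sum_subset (Finset.range_subset_range.2 (by omega : min t (m-1) + 1 ≤ m))]
    · intro k hk hk2
      rw [Finset.mem_range] at hk hk2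
      rw [if_neg (by omega)]
    · rw [Finset.mem_range] at hk
      rw [if_pos (by omega)]
  have hYCU : ∀ θ, Y θ = C θ * U θ := by
    intro θ
    rw [hY, hC, hU]
    simp only
    rw [Finset.sum_mul_sum]
    have lhs : ∑ t ∈ range M, (y t : ℂ) * Complex.exp (-(Complex.I*θ*t))
        = ∑ k ∈ range m, ∑ t ∈ range M,
            (if k ≤ t then (g k : ℂ) * (u (t-k) : ℂ) * Complex.exp (-(Complex.I*θ*t)) else 0) := by
      rw [Finset.sum_comm]
      refine Finset.sum_congr rfl fun t _ => ?_
      rw [hyc t]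
      push_cast
      rw [Finset.sum_mul]
      refine Finset.sum_congr rfl fun k _ => ?_
      split_ifs <;> simp
    rw [lhs]
    refine Finset.sum_congr rfl fun k hk => ?_
    rw [Finset.mem_range] at hk
    -- inner sum over t restricted to k ≤ t < M, substituting t = k + s
    rw [Finset.sum_ite, Finset.sum_const_zero, add_zero]
    have hfil : (range M).filter (k ≤ ·) = Finset.Ico k M := by
      ext x; simp [Finset.mem_filter, Finset.mem_range, Finset.mem_Ico]; omega
    rw [hfil, Finset.sum_Ico_eq_sum_range]
    have hsub : range (M - k) ⊆ range M := Finset.range_subset_range.2 (by omega)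
    rw [← Finset.sum_subset hsub (f := fun s =>
        (g k : ℂ) * Complex.exp (-(Complex.I * (θ * k))) * ((u s : ℂ) * Complex.exp (-(Complex.I*θ*s))))
      (by
        intro s _ hs2
        rw [Finset.mem_range, not_lt] at hs2
        simp [hN s (by omega)])]
    refine Finset.sum_congr rfl fun s _ => ?_
    have hks : k + s - k = s := by omega
    rw [hks, show -(Complex.I*θ*((k:ℕ)+s:ℕ)) = -(Complex.I*(θ*(k:ℕ))) + -(Complex.I*θ*(s:ℕ)) by
      push_cast; ring, Complex.exp_add]
    ring
  -- the real integrand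
  set G : ℝ → ℝ := fun θ => (Y θ * (starRingEnd ℂ) (U θ)).re
      - ρ * (Y θ * (starRingEnd ℂ) (Y θ)).re - ν * (U θ * (starRingEnd ℂ) (U θ)).re with hG
  have hGnn : ∀ θ, 0 ≤ G θ := by
    intro θ
    have h1 := hfreq θ
    rw [hG]
    simp only [hYCU θ]
    rw [show C θ * U θ * (starRingEnd ℂ) (U θ) = C θ * (U θ * (starRingEnd ℂ) (U θ)) by ring]
    rw [Complex.mul_conj]
    rw [show C θ * U θ * (starRingEnd ℂ) (C θ * U θ)
        = (C θ * (starRingEnd ℂ) (C θ)) * (U θ * (starRingEnd ℂ) (U θ)) by rw [map_mul]; ring]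
    rw [Complex.mul_conj, Complex.mul_conj]
    rw [← Complex.ofReal_mul, Complex.ofReal_re]
    simp only [Complex.mul_re, Complex.ofReal_re, Complex.ofReal_im, mul_zero, sub_zero]
    have h2 : Complex.normSq (C θ) = ‖C θ‖ ^ 2 := (Complex.sq_norm _).symm
    have : (C θ).re * Complex.normSq (U θ) - ρ * (Complex.normSq (C θ) * Complex.normSq (U θ))
        - ν * Complex.normSq (U θ)
        = ((C θ).re - ρ * ‖C θ‖ ^ 2 - ν) * Complex.normSq (U θ) := by
      rw [h2]; ring
    rw [this]
    exact mul_nonneg h1 (Complex.normSq_nonneg _)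
  -- integrability helpers
  have hcontU : Continuous U := contin u M
  have hcontY : Continuous Y := contin y M
  have hint1 : IntervalIntegrable (fun θ => Y θ * (starRingEnd ℂ) (U θ)) MeasureTheory.volume 0 (2*π) :=
    (hcontY.mul (Complex.continuous_conj.comp hcontU)).intervalIntegrable _ _
  have hint2 : IntervalIntegrable (fun θ => Y θ * (starRingEnd ℂ) (Y θ)) MeasureTheory.volume 0 (2*π) :=
    (hcontY.mul (Complex.continuous_conj.comp hcontY)).intervalIntegrable _ _
  have hint3 : IntervalIntegrable (fun θ => U θ * (starRingEnd ℂ) (U θ)) MeasureTheory.volume 0 (2*π) :=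
    (hcontU.mul (Complex.continuous_conj.comp hcontU)).intervalIntegrable _ _
  -- compute the integral of G
  have hre : ∀ (f : ℝ → ℂ), IntervalIntegrable f MeasureTheory.volume 0 (2*π) →
      ∫ θ in (0:ℝ)..(2*π), (f θ).re = (∫ θ in (0:ℝ)..(2*π), f θ).re := by
    intro f hf
    exact (ContinuousLinearMap.intervalIntegral_comp_comm Complex.reCLM hf)
  have hintG : ∫ θ in (0:ℝ)..(2*π), G θ
      = 2*π * ∑ t ∈ range M, (u t * y t - ρ * (y t)^2 - ν * (u t)^2) := by
    rw [hG]
    rw [intervalIntegral.integral_sub, intervalIntegral.integral_sub]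
    · rw [intervalIntegral.integral_const_mul, intervalIntegral.integral_const_mul]
      rw [hre _ hint1, hre _ hint2, hre _ hint3]
      rw [parseval M y u, parseval M y y, parseval M u u]
      rw [Complex.ofReal_re, Complex.ofReal_re, Complex.ofReal_re]
      simp only [Finset.mul_sum, ← Finset.sum_sub_distrib]
      exact Finset.sum_congr rfl fun t _ => by ring
    · exact (Complex.continuous_re.comp (hcontY.mul (Complex.continuous_conj.comp hcontU))).intervalIntegrable _ _
    · exact (continuous_const.mul (Complex.continuous_re.comp (hcontY.mul (Complex.continuous_conj.comp hcontY)))).intervalIntegrable _ _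
    · exact ((Complex.continuous_re.comp (hcontY.mul (Complex.continuous_conj.comp hcontU))).intervalIntegrable _ _).sub
        ((continuous_const.mul (Complex.continuous_re.comp (hcontY.mul (Complex.continuous_conj.comp hcontY)))).intervalIntegrable _ _)
    · exact (continuous_const.mul (Complex.continuous_re.comp (hcontU.mul (Complex.continuous_conj.comp hcontU)))).intervalIntegrable _ _
  have hpos : (0:ℝ) ≤ ∫ θ in (0:ℝ)..(2*π), G θ := by
    apply intervalIntegral.integral_nonneg
    · positivity
    · intro x _
      exact hGnn x
  rw [hintG] at hpos
  have h2pi : (0:ℝ) < 2*π := by positivity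
  nlinarith [hpos]
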